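/- (Associativity/commutation of canonical convolutions) For a sequence s ∈ l¹(ℤ²) and functions f, g ∈ L¹(ℝ²) ∩ L²(ℝ²), the canonical continuous and semi-discrete convolutions commute: f ⋆_c (s ⋆_{sd} g) = s ⋆_{sd} (f ⋆_c g). -/

import Mathlib

open MeasureTheory Matrix Complex

noncomputable section

abbrev V2 : Type := Fin 2 → ℝ
abbrev Z2 : Type := Fin 2 → ℤ
abbrev M2 : Type := Matrix (Fin 2) (Fin 2) ℝ

/-- cast an integer vector to a real vector -/
def zc (k : Z2) : V2 := fun i => (k i : ℝ)

/-- `ePi r = e^{iπ r}` -/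
def ePi (r : ℝ) : ℂ := Complex.exp (Real.pi * Complex.I * r)

/-- quadratic/bilinear form `xᵀ P y` -/
def Q (P : M2) (x y : V2) : ℝ := x ⬝ᵥ P.mulVec y

/-- `√(det (iB))` (note `det(iB) = i² det B` for 2×2 `B`) -/
def sdet (B : M2) : ℂ := ((Complex.I ^ 2 * (B.det : ℂ))) ^ ((1 : ℂ)/2)

/-- the chirp `λ_M(t) = e^{iπ tᵀB⁻¹At}` -/
def lam (A B : M2) (t : V2) : ℂ := ePi (Q (B⁻¹ * A) t t)

/-- the continuous 2D non-separable LCT -/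
def LCT (A B D : M2) (f : V2 → ℂ) (ξ : V2) : ℂ :=
  (sdet B)⁻¹ * ∫ u : V2, f u * ePi (Q (B⁻¹ * A) u u - 2 * Q B⁻¹ u ξ + Q (D * B⁻¹) ξ ξ)

/-- the 2D discrete-time non-separable LCT -/
def DLCT (A B D : M2) (s : Z2 → ℂ) (ξ : V2) : ℂ :=
  (sdet B)⁻¹ * ∑' k : Z2,
    s k * ePi (Q (B⁻¹ * A) (zc k) (zc k) - 2 * Q B⁻¹ (zc k) ξ + Q (D * B⁻¹) ξ ξ)

/-- the canonical (continuous) convolution `⋆_c` -/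
def cconv (A B : M2) (f g : V2 → ℂ) (t : V2) : ℂ :=
  ePi (-(Q (B⁻¹ * A) t t)) * (sdet B)⁻¹ *
    ∫ x : V2, lam A B (t - x) * f (t - x) * (lam A B x * g x)

/-- the canonical semi-discrete convolution `⋆_{sd}` -/
def sdconv (A B : M2) (s : Z2 → ℂ) (g : V2 → ℂ) (t : V2) : ℂ :=
  ePi (-(Q (B⁻¹ * A) t t)) * (sdet B)⁻¹ *
    ∑' k : Z2, lam A B (zc k) * s k * (lam A B (t - zc k) * g (t - zc k))

/-- the canonical discrete convolution `⋆_d` -/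
def dconv (A B : M2) (s c : Z2 → ℂ) (l : Z2) : ℂ :=
  ePi (-(Q (B⁻¹ * A) (zc l) (zc l))) * (sdet B)⁻¹ *
    ∑' k : Z2, lam A B (zc k) * s k * (lam A B (zc (l - k)) * c (l - k))

/-- symplecticity of the block matrix `[A,B;C,D]` -/
def Symp (A B C D : M2) : Prop :=
  A * Bᵀ = B * Aᵀ ∧ C * Dᵀ = D * Cᵀ ∧ A * Dᵀ - B * Cᵀ = 1

/-- the unit half-open square `[0,1)²` -/
def box : Set V2 := Set.univ.pi fun _ => Set.Ico (0:ℝ) 1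

/-- real cast of an integer matrix -/
def Mr (M : Matrix (Fin 2) (Fin 2) ℤ) : M2 := M.map (Int.cast : ℤ → ℝ)

/-- the set `N(M)` of integer points in the fundamental parallelepiped -/
def NM (M : Matrix (Fin 2) (Fin 2) ℤ) : Set Z2 :=
  {k : Z2 | ∃ x : V2, x ∈ box ∧ zc k = (Mr M).mulVec x}

/-- the discrete time Fourier transform -/
def DTFT (d : Z2 → ℂ) (ξ : V2) : ℂ := ∑' k : Z2, d k * ePi (-(2 * (zc k ⬝ᵥ ξ)))


/-! ### Auxiliary lemmas -/

lemma norm_ePi (r : ℝ) : ‖ePi r‖ = 1 := by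
  simp [ePi, Complex.norm_exp, Complex.mul_re, Complex.mul_im]

lemma nnnorm_lam (A B : M2) (x : V2) : ‖lam A B x‖₊ = 1 := by
  ext
  simpa [lam] using norm_ePi (Q (B⁻¹ * A) x x)

lemma ePi_mul_neg (r : ℝ) : ePi r * ePi (-r) = 1 := by
  have h : (Real.pi : ℂ) * Complex.I * (r : ℝ) + Real.pi * Complex.I * (-r : ℝ) = 0 := by
    push_cast; ring
  rw [ePi, ePi, ← Complex.exp_add, h, Complex.exp_zero]

lemma continuous_lam (A B : M2) : Continuous (lam A B) := by
  unfold lam ePi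
  refine Complex.continuous_exp.comp (Continuous.mul continuous_const ?_)
  refine Complex.continuous_ofReal.comp ?_
  unfold Q Matrix.mulVec dotProduct
  fun_prop

/-- the kernel family appearing in the proof -/
def Fker (A B : M2) (s : Z2 → ℂ) (f g : V2 → ℂ) (t : V2) (k : Z2) (x : V2) : ℂ :=
  lam A B (t - x) * f (t - x) *
    (lam A B (zc k) * s k * (lam A B (x - zc k) * g (x - zc k)))

/-- The canonical continuous and semi-discrete convolutions commute:
`f ⋆_c (s ⋆_{sd} g) = s ⋆_{sd} (f ⋆_c g)`. -/
theorem cconv_sdconv_comm (A B C D : M2) (hSymp : Symp A B C D) (hB : B.det ≠ 0)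
    (s : Z2 → ℂ) (hs : Summable fun k => ‖s k‖)
    (f g : V2 → ℂ) (hf1 : Integrable f) (hf2 : MemLp f 2)
    (hg1 : Integrable g) (hg2 : MemLp g 2) :
    ∀ t : V2, cconv A B f (sdconv A B s g) t = sdconv A B s (cconv A B f g) t := by
  intro t
  have key : ∀ x : V2, lam A B x * ePi (-(Q (B⁻¹ * A) x x)) = 1 := fun x =>
    ePi_mul_neg (Q (B⁻¹ * A) x x)
  -- measurability pieces
  have hmf : AEStronglyMeasurable (fun x : V2 => f (t - x)) volume :=
    hf1.1.comp_quasiMeasurePreserving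
      (Measure.measurePreserving_sub_left volume t).quasiMeasurePreserving
  have hmg : ∀ k : Z2, AEStronglyMeasurable (fun x : V2 => g (x - zc k)) volume := fun k =>
    hg1.1.comp_quasiMeasurePreserving
      (measurePreserving_sub_right volume (zc k)).quasiMeasurePreserving
  have hmF : ∀ k : Z2, AEStronglyMeasurable (Fker A B s f g t k) volume := by
    intro k
    refine AEStronglyMeasurable.mul (AEStronglyMeasurable.mul ?_ hmf)
      (AEStronglyMeasurable.mul aestronglyMeasurable_const (AEStronglyMeasurable.mul ?_ (hmg k)))
    · exact ((continuous_lam A B).comp (continuous_const.sub continuous_id)).aestronglyMeasurable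
    · exact ((continuous_lam A B).comp (continuous_id.sub continuous_const)).aestronglyMeasurable
  -- L² masses
  set Cf : ENNReal := ∫⁻ x, (‖f x‖₊ : ENNReal) ^ (2 : ℝ) with hCfdef
  set Cg : ENNReal := ∫⁻ x, (‖g x‖₊ : ENNReal) ^ (2 : ℝ) with hCgdef
  have hCf : Cf < ⊤ := by
    have := lintegral_rpow_enorm_lt_top_of_eLpNorm_lt_top (f := f) (p := 2)
      two_ne_zero ENNReal.ofNat_ne_top hf2.2
    simpa [hCfdef, enorm_eq_nnnorm] using this
  have hCg : Cg < ⊤ := by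
    have := lintegral_rpow_enorm_lt_top_of_eLpNorm_lt_top (f := g) (p := 2)
      two_ne_zero ENNReal.ofNat_ne_top hg2.2
    simpa [hCgdef, enorm_eq_nnnorm] using this
  have hC : Cf ^ ((1:ℝ)/2) * Cg ^ ((1:ℝ)/2) ≠ ⊤ := by
    exact ENNReal.mul_ne_top
      (ENNReal.rpow_ne_top_of_nonneg (by norm_num) hCf.ne)
      (ENNReal.rpow_ne_top_of_nonneg (by norm_num) hCg.ne)
  -- translation invariance
  have htf : (∫⁻ x, (‖f (t - x)‖₊ : ENNReal) ^ (2 : ℝ)) = Cf := by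
    rw [hCfdef]
    exact (Measure.measurePreserving_sub_left volume t).lintegral_comp_emb
      (MeasurableEquiv.subLeft t).measurableEmbedding (fun y => (‖f y‖₊ : ENNReal) ^ (2 : ℝ))
  have htg : ∀ k : Z2, (∫⁻ x, (‖g (x - zc k)‖₊ : ENNReal) ^ (2 : ℝ)) = Cg := by
    intro k
    rw [hCgdef]
    exact (measurePreserving_sub_right volume (zc k)).lintegral_comp_emb
      (MeasurableEquiv.subRight (zc k)).measurableEmbedding (fun y => (‖g y‖₊ : ENNReal) ^ (2 : ℝ))
  -- Hölder bound, uniform in k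
  have hHold : ∀ k : Z2, (∫⁻ x, (‖f (t - x)‖₊ : ENNReal) * (‖g (x - zc k)‖₊ : ENNReal)) ≤
      Cf ^ ((1:ℝ)/2) * Cg ^ ((1:ℝ)/2) := by
    intro k
    have h2 : (2 : ℝ).HolderConjugate 2 := ⟨by norm_num, by norm_num, by norm_num⟩
    have := ENNReal.lintegral_mul_le_Lp_mul_Lq volume h2 hmf.enorm (hmg k).enorm
    simp only [Pi.mul_apply] at this
    calc (∫⁻ x, (‖f (t - x)‖₊ : ENNReal) * (‖g (x - zc k)‖₊ : ENNReal))
        ≤ (∫⁻ x, (‖f (t - x)‖₊ : ENNReal) ^ (2:ℝ)) ^ ((1:ℝ)/2) *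
          (∫⁻ x, (‖g (x - zc k)‖₊ : ENNReal) ^ (2:ℝ)) ^ ((1:ℝ)/2) := this
      _ = Cf ^ ((1:ℝ)/2) * Cg ^ ((1:ℝ)/2) := by rw [htf, htg k]
  -- summability of the lintegrals
  have hFk : ∀ k : Z2, (∫⁻ x, (‖Fker A B s f g t k x‖₊ : ENNReal)) ≤
      (‖s k‖₊ : ENNReal) * (Cf ^ ((1:ℝ)/2) * Cg ^ ((1:ℝ)/2)) := by
    intro k
    have heq : ∀ x : V2, ((‖Fker A B s f g t k x‖₊ : ENNReal)) =
        (‖s k‖₊ : ENNReal) * ((‖f (t - x)‖₊ : ENNReal) * (‖g (x - zc k)‖₊ : ENNReal)) := by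
      intro x
      simp only [Fker, nnnorm_mul, nnnorm_lam, one_mul, mul_one, ENNReal.coe_mul]
      ring
    rw [lintegral_congr heq, lintegral_const_mul' _ _ ENNReal.coe_ne_top]
    exact mul_le_mul_right (hHold k) _
  have hsum : (∑' k : Z2, ∫⁻ x, (‖Fker A B s f g t k x‖₊ : ENNReal)) ≠ ⊤ := by
    have hb : (∑' k : Z2, ∫⁻ x, (‖Fker A B s f g t k x‖₊ : ENNReal)) ≤
        (∑' k : Z2, (‖s k‖₊ : ENNReal)) * (Cf ^ ((1:ℝ)/2) * Cg ^ ((1:ℝ)/2)) := by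
      rw [← ENNReal.tsum_mul_right]
      exact ENNReal.tsum_le_tsum hFk
    have hss : (∑' k : Z2, (‖s k‖₊ : ENNReal)) ≠ ⊤ :=
      ENNReal.tsum_coe_ne_top_iff_summable.2 (by simpa [← NNReal.summable_coe] using hs)
    exact ne_top_of_le_ne_top (ENNReal.mul_ne_top hss hC) hb
  -- pointwise identification of the LHS integrand
  have h1 : (fun x : V2 => lam A B (t - x) * f (t - x) * (lam A B x * sdconv A B s g x)) =
      fun x => (sdet B)⁻¹ * ∑' k : Z2, Fker A B s f g t k x := by
    funext x
    unfold sdconv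
    calc lam A B (t - x) * f (t - x) *
          (lam A B x * (ePi (-(Q (B⁻¹ * A) x x)) * (sdet B)⁻¹ *
            ∑' k : Z2, lam A B (zc k) * s k * (lam A B (x - zc k) * g (x - zc k))))
        = (lam A B x * ePi (-(Q (B⁻¹ * A) x x))) * ((sdet B)⁻¹ *
            (lam A B (t - x) * f (t - x) *
              ∑' k : Z2, lam A B (zc k) * s k * (lam A B (x - zc k) * g (x - zc k)))) := by
          ring
      _ = (sdet B)⁻¹ * (lam A B (t - x) * f (t - x) *
            ∑' k : Z2, lam A B (zc k) * s k * (lam A B (x - zc k) * g (x - zc k))) := by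
          rw [key x, one_mul]
      _ = (sdet B)⁻¹ * ∑' k : Z2, Fker A B s f g t k x := by
          congr 1
          rw [← tsum_mul_left]
          rfl
  -- per-index identification with the RHS terms
  have h3 : ∀ k : Z2, (sdet B)⁻¹ * ∫ x, Fker A B s f g t k x =
      lam A B (zc k) * s k * (lam A B (t - zc k) * cconv A B f g (t - zc k)) := by
    intro k
    have hsub : (∫ x : V2, lam A B (t - x) * f (t - x) *
          (lam A B (x - zc k) * g (x - zc k))) =
        ∫ y : V2, lam A B (t - zc k - y) * f (t - zc k - y) * (lam A B y * g y) := by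
      have h := integral_sub_right_eq_self (μ := volume)
        (fun y : V2 => lam A B (t - zc k - y) * f (t - zc k - y) * (lam A B y * g y)) (zc k)
      simp only [sub_sub_sub_cancel_right] at h
      exact h
    have hker : (fun x : V2 => Fker A B s f g t k x) =
        fun x => (lam A B (zc k) * s k) *
          (lam A B (t - x) * f (t - x) * (lam A B (x - zc k) * g (x - zc k))) := by
      funext x; unfold Fker; ring
    rw [hker, integral_const_mul, hsub]
    unfold cconv
    calc (sdet B)⁻¹ * (lam A B (zc k) * s k *
          ∫ y : V2, lam A B (t - zc k - y) * f (t - zc k - y) * (lam A B y * g y))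
        = lam A B (zc k) * s k * ((sdet B)⁻¹ *
            ∫ y : V2, lam A B (t - zc k - y) * f (t - zc k - y) * (lam A B y * g y)) := by ring
      _ = lam A B (zc k) * s k * (lam A B (t - zc k) *
            (ePi (-(Q (B⁻¹ * A) (t - zc k) (t - zc k))) * (sdet B)⁻¹ *
              ∫ y : V2, lam A B (t - zc k - y) * f (t - zc k - y) * (lam A B y * g y))) := by
          rw [show lam A B (t - zc k) *
              (ePi (-(Q (B⁻¹ * A) (t - zc k) (t - zc k))) * (sdet B)⁻¹ *
                ∫ y : V2, lam A B (t - zc k - y) * f (t - zc k - y) * (lam A B y * g y)) =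
              (lam A B (t - zc k) * ePi (-(Q (B⁻¹ * A) (t - zc k) (t - zc k)))) * ((sdet B)⁻¹ *
                ∫ y : V2, lam A B (t - zc k - y) * f (t - zc k - y) * (lam A B y * g y)) from by
            ring, key (t - zc k), one_mul]
  -- assemble
  calc cconv A B f (sdconv A B s g) t
      = ePi (-(Q (B⁻¹ * A) t t)) * (sdet B)⁻¹ *
        ∑' k : Z2, (sdet B)⁻¹ * ∫ x, Fker A B s f g t k x := by
        unfold cconv
        rw [h1, integral_const_mul, integral_tsum hmF hsum, ← tsum_mul_left]
    _ = ePi (-(Q (B⁻¹ * A) t t)) * (sdet B)⁻¹ *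
        ∑' k : Z2, lam A B (zc k) * s k *
          (lam A B (t - zc k) * cconv A B f g (t - zc k)) := by
        rw [tsum_congr h3]
    _ = sdconv A B s (cconv A B f g) t := rfl
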